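/- Let f(z) = (zq;q)_m (z^{−1}q;q)_n be viewed as a Laurent polynomial in z over ℤ[q]. Then the Laurent polynomial identity (1 − z^{−1}) f(z) = Σ_{k=−n−1}^{m} (−1)^k q^{binom(k+1,2)} z^k [m+n+1 choose n+1+k]_q holds; consequently, evaluating the z-derivative of both sides at z = 1 yields f(1) = Σ_{k=−n−1}^{m} (−1)^k k q^{binom(k+1,2)} [m+n+1 choose n+1+k]_q. -/

import Mathlib

open Finset

/-- The q-shifted factorial `(q;q)_r = ∏_{i=1}^r (1 - q^i)` in `ℚ(q)`. -/
noncomputable def qPoch (r : ℕ) : RatFunc ℚ :=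
  ∏ i ∈ Finset.range r, (1 - (RatFunc.X : RatFunc ℚ) ^ (i + 1))

/-- The Gaussian binomial coefficient `[a choose b]_q`, zero outside `0 ≤ b ≤ a`. -/
noncomputable def qbinom (a : ℕ) (b : ℤ) : RatFunc ℚ :=
  if 0 ≤ b ∧ b ≤ (a : ℤ) then qPoch a / (qPoch b.toNat * qPoch (a - b.toNat)) else 0

abbrev F := RatFunc ℚ


lemma X_pow_ne_one (i : ℕ) (hi : 1 ≤ i) : (RatFunc.X : F) ^ i ≠ 1 := by
  intro h
  have h2 : (algebraMap (Polynomial ℚ) F) (Polynomial.X ^ i) = algebraMap (Polynomial ℚ) F 1 := by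
    simpa [map_pow, RatFunc.algebraMap_X] using h
  have := RatFunc.algebraMap_injective ℚ h2
  have hd := congrArg Polynomial.natDegree this
  simp [Polynomial.natDegree_X_pow] at hd
  omega

lemma one_sub_X_pow_ne_zero (i : ℕ) (hi : 1 ≤ i) : (1 - (RatFunc.X : F) ^ i) ≠ 0 := by
  intro h
  exact X_pow_ne_one i hi (sub_eq_zero.mp h).symm

lemma qPoch_ne_zero (r : ℕ) : qPoch r ≠ 0 := by
  unfold qPoch
  exact Finset.prod_ne_zero_iff.mpr fun i _ => one_sub_X_pow_ne_zero (i+1) (Nat.le_add_left 1 i)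

lemma qPoch_succ (r : ℕ) : qPoch (r+1) = qPoch r * (1 - (RatFunc.X : F) ^ (r+1)) := by
  unfold qPoch; rw [Finset.prod_range_succ]

lemma qPoch_zero : qPoch 0 = 1 := by simp [qPoch]

lemma qbinom_neg (a : ℕ) (b : ℤ) (h : b < 0) : qbinom a b = 0 := by
  unfold qbinom; rw [if_neg]; omega

lemma qbinom_gt (a : ℕ) (b : ℤ) (h : (a:ℤ) < b) : qbinom a b = 0 := by
  unfold qbinom; rw [if_neg]; omega

lemma qbinom_of_le (a : ℕ) (b : ℕ) (h : b ≤ a) :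
    qbinom a (b:ℤ) = qPoch a / (qPoch b * qPoch (a - b)) := by
  unfold qbinom; rw [if_pos (by omega)]; simp

lemma qbinom_zero (a : ℕ) : qbinom a 0 = 1 := by
  rw [show (0:ℤ) = ((0:ℕ):ℤ) by simp, qbinom_of_le a 0 (by omega)]
  simp [qPoch_zero, div_self (qPoch_ne_zero a)]

lemma qbinom_self (a : ℕ) : qbinom a a = 1 := by
  rw [qbinom_of_le a a le_rfl]
  simp [qPoch_zero, div_self (qPoch_ne_zero a)]

lemma qbinom_pascal (a : ℕ) (b : ℤ) :
    qbinom (a+1) b = qbinom a b + (RatFunc.X : F)^((a:ℤ)+1-b) * qbinom a (b-1) := by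
  rcases lt_or_ge b 0 with hb | hb
  · rw [qbinom_neg _ _ hb, qbinom_neg _ _ hb, qbinom_neg _ _ (by omega)]; ring
  rcases eq_or_lt_of_le hb with hb0 | hb1
  · rw [← hb0, qbinom_zero, qbinom_zero, qbinom_neg _ _ (by omega)]; ring
  rcases lt_or_ge (a:ℤ) (b-1) with hbig | hble
  · rw [qbinom_gt _ _ (by omega), qbinom_gt _ _ (by omega), qbinom_gt _ _ hbig]; ring
  -- now 1 ≤ b ≤ a+1
  obtain ⟨e, rfl⟩ : ∃ e : ℕ, b = (e:ℤ) + 1 := ⟨(b-1).toNat, by omega⟩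
  obtain ⟨d, rfl⟩ : ∃ d : ℕ, a = e + d := ⟨a - e, by omega⟩
  rcases d with _ | d
  · -- b = a + 1
    rw [show ((e:ℤ)+1) = ((e+1:ℕ):ℤ) by push_cast; ring]
    rw [show e + 0 + 1 = e + 1 by ring]
    rw [qbinom_self (e+1), qbinom_gt (e+0) _ (by push_cast; omega)]
    rw [show ((e+1:ℕ):ℤ) - 1 = ((e+0:ℕ):ℤ) by push_cast; ring, qbinom_self (e+0)]
    rw [show ((e+0:ℕ):ℤ) + 1 - ((e+1:ℕ):ℤ) = 0 by push_cast; ring]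
    simp
  · 
    rw [show ((e:ℤ)+1) = ((e+1:ℕ):ℤ) by push_cast; ring]
    rw [show (((e+1:ℕ)):ℤ) - 1 = ((e:ℕ):ℤ) by push_cast; ring]
    rw [show ((e+(d+1):ℕ):ℤ) + 1 - ((e+1:ℕ):ℤ) = ((d+1:ℕ):ℤ) by push_cast; ring]
    rw [qbinom_of_le (e+(d+1)+1) (e+1) (by omega), qbinom_of_le (e+(d+1)) (e+1) (by omega),
      qbinom_of_le (e+(d+1)) e (by omega), zpow_natCast]
    rw [show e+(d+1)+1-(e+1) = d+1 by omega, show e+(d+1)-(e+1) = d by omega,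
      show e+(d+1)-e = d+1 by omega]
    rw [show e+(d+1)+1 = (e+d+1)+1 by ring, qPoch_succ (e+d+1),
      show e+(d+1) = e+d+1 by ring, qPoch_succ (e+d), qPoch_succ e, qPoch_succ d]
    have hE := one_sub_X_pow_ne_zero (e+1) (by omega)
    have hD := one_sub_X_pow_ne_zero (d+1) (by omega)
    have hpe := qPoch_ne_zero e
    have hpd := qPoch_ne_zero d
    have hped := qPoch_ne_zero (e+d)
    have hkey : (RatFunc.X : F)^(d+1) * (RatFunc.X : F)^(e+1) = (RatFunc.X : F)^(e+d+1+1) := by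
      rw [← pow_add]; ring_nf
    field_simp
    ring_nf

lemma qbinom_symm (a : ℕ) (b : ℤ) : qbinom a ((a:ℤ) - b) = qbinom a b := by
  rcases lt_or_ge b 0 with hb | hb
  · rw [qbinom_neg a b hb, qbinom_gt a _ (by omega)]
  rcases le_or_gt b (a:ℤ) with hba | hba
  · obtain ⟨c, rfl⟩ : ∃ c : ℕ, b = (c:ℤ) := ⟨b.toNat, by omega⟩
    have hc : c ≤ a := by omega
    rw [show ((a:ℤ) - (c:ℤ)) = ((a - c : ℕ) : ℤ) by omega]
    rw [qbinom_of_le a (a-c) (by omega), qbinom_of_le a c hc,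
      show a - (a - c) = c by omega, mul_comm]
  · rw [qbinom_gt a b hba, qbinom_neg a _ (by omega)]

lemma two_choose_two (j : ℕ) : 2 * j.choose 2 + j = j * j := by
  induction j with
  | zero => simp
  | succ j ih =>
    rw [Nat.choose_succ_succ, Nat.choose_one_right]
    nlinarith [ih]

lemma qbinthm (N : ℕ) (x : F) :
    ∏ i ∈ range N, (1 + x * (RatFunc.X : F)^i) =
      ∑ j ∈ range (N+1), (RatFunc.X : F)^(j.choose 2) * qbinom N j * x^j := by
  induction N with
  | zero => simp [qbinom_zero]
  | succ N ih =>
    rw [prod_range_succ, ih]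
    have hpas : ∀ j ∈ range (N+2),
        (RatFunc.X : F)^(j.choose 2) * qbinom (N+1) j * x^j =
        (RatFunc.X : F)^(j.choose 2) * qbinom N j * x^j +
        (RatFunc.X : F)^(j.choose 2) * ((RatFunc.X : F)^((N:ℤ)+1-j) * qbinom N ((j:ℤ)-1)) * x^j := by
      intro j _
      rw [qbinom_pascal N j]; ring
    rw [sum_congr rfl hpas, sum_add_distrib]
    have h1 : ∑ j ∈ range (N+2), (RatFunc.X : F)^(j.choose 2) * qbinom N j * x^j
        = ∑ j ∈ range (N+1), (RatFunc.X : F)^(j.choose 2) * qbinom N j * x^j := by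
      rw [sum_range_succ, show qbinom N ((N+1:ℕ):ℤ) = 0 from qbinom_gt N _ (by push_cast; omega)]
      simp
    have h2 : ∑ j ∈ range (N+2), (RatFunc.X : F)^(j.choose 2) * ((RatFunc.X : F)^((N:ℤ)+1-j) * qbinom N ((j:ℤ)-1)) * x^j
        = ∑ j ∈ range (N+1), ((RatFunc.X : F)^(j.choose 2) * qbinom N j * x^j) * (x * (RatFunc.X : F)^N) := by
      rw [sum_range_succ']
      rw [show ((0:ℕ):ℤ) - 1 = -1 by ring, qbinom_neg N (-1) (by omega)]
      simp only [mul_zero, zero_mul, pow_zero, mul_one, add_zero]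
      apply sum_congr rfl
      intro k hk
      have hkN : k ≤ N := by simp at hk; omega
      rw [show ((N:ℤ)+1-((k+1:ℕ):ℤ)) = ((N-k:ℕ):ℤ) by push_cast; omega, zpow_natCast,
        show ((k+1:ℕ):ℤ) - 1 = ((k:ℕ):ℤ) by push_cast; ring]
      have key : (RatFunc.X : F)^((k+1).choose 2) * (RatFunc.X : F)^(N-k)
          = (RatFunc.X : F)^(k.choose 2) * (RatFunc.X : F)^N := by
        rw [← pow_add, ← pow_add]
        congr 1
        have : (k+1).choose 2 = k + k.choose 2 := by
          rw [Nat.choose_succ_succ, Nat.choose_one_right]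
        omega
      linear_combination (qbinom N (k:ℤ) * x^(k+1)) * key
    rw [h1, h2, ← sum_mul]; ring

lemma sum_tri (m : ℕ) : ∑ i ∈ range m, (i+1) = (m+1).choose 2 := by
  induction m with
  | zero => simp
  | succ m ih =>
    rw [sum_range_succ, ih]
    have h : (m+1+1).choose 2 = (m+1).choose 1 + (m+1).choose 2 := Nat.choose_succ_succ (m+1) 1
    rw [Nat.choose_one_right] at h
    omega

lemma part1 (m n : ℕ) (z : F) (hz : z ≠ 0) :
    (1 - z⁻¹) *
        ((∏ i ∈ Finset.range m, (1 - z * (RatFunc.X : RatFunc ℚ) ^ (i + 1))) *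
          (∏ i ∈ Finset.range n, (1 - z⁻¹ * (RatFunc.X : RatFunc ℚ) ^ (i + 1)))) =
      ∑ k ∈ Finset.Icc (-(n : ℤ) - 1) (m : ℤ),
        (-1 : RatFunc ℚ) ^ k * (RatFunc.X : RatFunc ℚ) ^ (k * (k + 1) / 2) * z ^ k *
          qbinom (m + n + 1) ((n : ℤ) + 1 + k) := by
  set q : F := (RatFunc.X : F) with hqdef
  have hq : q ≠ 0 := RatFunc.X_ne_zero
  set x : F := -z⁻¹ * (q^m)⁻¹ with hxdef
  -- Step A : product identity
  have hA : (1 - z⁻¹) *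
      ((∏ i ∈ Finset.range m, (1 - z * q ^ (i + 1))) *
        (∏ i ∈ Finset.range n, (1 - z⁻¹ * q ^ (i + 1)))) =
      (-z)^m * q^((m+1).choose 2) * ∏ i ∈ range (m+n+1), (1 + x * q^i) := by
    have p1 : ∏ i ∈ range (m+(n+1)), (1 + x * q^i)
        = (∏ i ∈ range m, (1 + x * q^i)) * ∏ i ∈ range (n+1), (1 + x * q^(m+i)) :=
      prod_range_add _ m (n+1)
    have p2 : ∀ i : ℕ, 1 + x * q^(m+i) = 1 - z⁻¹ * q^i := by
      intro i
      rw [hxdef, pow_add]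
      field_simp
      ring
    have p3 : ∏ i ∈ range (n+1), (1 + x * q^(m+i))
        = (1 - z⁻¹) * ∏ i ∈ range n, (1 - z⁻¹ * q^(i+1)) := by
      simp only [p2]
      rw [prod_range_succ']
      simp [mul_comm]
    have p4 : ∏ i ∈ range m, (1 - z * q^(i+1))
        = (-z)^m * q^((m+1).choose 2) * ∏ i ∈ range m, (1 + x * q^i) := by
      have e1 : ∀ i ∈ range m, (1 - z * q^(i+1)) = (-z * q^(i+1)) * (1 + x * q^(m-1-i)) := by
        intro i hi
        have him : i < m := mem_range.mp hi
        have hXm : q^(i+1) * q^(m-1-i) = q^m := by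
          rw [← pow_add]; congr 1; omega
        rw [hxdef]
        field_simp
        linear_combination (-1) * hXm
      rw [prod_congr rfl e1, prod_mul_distrib, ← prod_range_reflect (fun i => 1 + x * q^i) m]
      rw [prod_mul_distrib, prod_const, prod_pow_eq_pow_sum, sum_tri, card_range]
    rw [show m+n+1 = m+(n+1) by ring, p1, p3, p4]
    ring
  rw [hA, qbinthm (m+n+1) x, mul_sum]
  -- Step B : reindex
  refine Finset.sum_nbij' (fun j => (m:ℤ) - j) (fun k => ((m:ℤ) - k).toNat) ?_ ?_ ?_ ?_ ?_
  · intro j hj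
    simp only [mem_range] at hj
    simp only [mem_Icc]
    omega
  · intro k hk
    simp only [mem_Icc] at hk
    simp only [mem_range]
    omega
  · intro j hj
    simp only [mem_range] at hj
    omega
  · intro k hk
    simp only [mem_Icc] at hk
    omega
  · intro j hj
    simp only [mem_range] at hj
    -- per-term identity
    have hsymm : qbinom (m+n+1) ((n:ℤ) + 1 + ((m:ℤ) - j)) = qbinom (m+n+1) (j:ℤ) := by
      rw [show (n:ℤ) + 1 + ((m:ℤ) - j) = ((m+n+1 : ℕ):ℤ) - (j:ℤ) by push_cast; ring]
      exact qbinom_symm (m+n+1) j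
    rw [hsymm]
    -- exponent identity in ℤ
    have hm2 : 2 * (((m+1).choose 2 : ℕ) : ℤ) = ((m:ℤ)+1) * m := by
      have h := two_choose_two (m+1)
      zify at h
      linear_combination h
    have hj2 : 2 * ((j.choose 2 : ℕ) : ℤ) = (j:ℤ) * ((j:ℤ)-1) := by
      have h := two_choose_two j
      zify at h
      linear_combination h
    have ht2 : 2 * (((m:ℤ)-j) * (((m:ℤ)-j) + 1) / 2) = ((m:ℤ)-j) * (((m:ℤ)-j)+1) := by
      rw [mul_comm]
      exact Int.ediv_mul_cancel (even_iff_two_dvd.mp (Int.even_mul_succ_self _))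
    have h2exp : 2 * ((((m+1).choose 2 : ℕ) : ℤ) + ((j.choose 2 : ℕ) : ℤ) - (m:ℤ)*(j:ℤ))
        = 2 * (((m:ℤ)-j) * (((m:ℤ)-j) + 1) / 2) := by
      linear_combination hm2 + hj2 - ht2
    have hexp : (((m+1).choose 2 : ℕ) : ℤ) + ((j.choose 2 : ℕ) : ℤ) - (m:ℤ)*(j:ℤ)
        = ((m:ℤ)-j) * (((m:ℤ)-j) + 1) / 2 := by omega
    -- q-power identity
    have hqq : q^((m+1).choose 2) * q^(j.choose 2) * ((q^m)⁻¹)^j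
        = q^(((m:ℤ)-j) * (((m:ℤ)-j) + 1) / 2) := by
      have h1 : ((q^m)⁻¹)^j = q^(-((m:ℤ)*(j:ℤ))) := by
        rw [← zpow_natCast q m, ← zpow_neg, ← zpow_natCast (q ^ (-(m:ℤ))) j, ← zpow_mul]
        congr 1
        ring
      rw [h1, ← zpow_natCast q ((m+1).choose 2), ← zpow_natCast q (j.choose 2),
        ← zpow_add₀ hq, ← zpow_add₀ hq, ← hexp]
      congr 1
    -- sign identity
    have hsign : ((-1 : F))^((m:ℤ) - j) = (-1:F)^m * (-1:F)^j := by
      rw [zpow_sub₀ (by norm_num : (-1:F) ≠ 0), zpow_natCast, zpow_natCast]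
      rw [div_eq_mul_inv, ← inv_pow, inv_neg, inv_one]
    -- z-power identity
    have hzz : z^((m:ℤ) - j) = z^m * (z⁻¹)^j := by
      rw [zpow_sub₀ hz, zpow_natCast, zpow_natCast, div_eq_mul_inv, inv_pow]
    rw [hsign, hzz, ← hqq, hxdef]
    ring

lemma part2 (m n : ℕ) :
    (∏ i ∈ Finset.range m, (1 - (1 : RatFunc ℚ) * (RatFunc.X : RatFunc ℚ) ^ (i + 1))) *
        (∏ i ∈ Finset.range n, (1 - (1 : RatFunc ℚ)⁻¹ * (RatFunc.X : RatFunc ℚ) ^ (i + 1))) =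
      ∑ k ∈ Finset.Icc (-(n : ℤ) - 1) (m : ℤ),
        (-1 : RatFunc ℚ) ^ k * (k : RatFunc ℚ) *
          (RatFunc.X : RatFunc ℚ) ^ (k * (k + 1) / 2) *
            qbinom (m + n + 1) ((n : ℤ) + 1 + k) := by
  set q : F := (RatFunc.X : F) with hqdef
  have hq : q ≠ 0 := RatFunc.X_ne_zero
  set c : ℤ → F := fun k => (-1:F)^k * q^(k*(k+1)/2) * qbinom (m+n+1) ((n:ℤ)+1+k) with hcdef
  set R : Polynomial F :=
    (∏ i ∈ range m, (1 - Polynomial.C (q^(i+1)) * Polynomial.X)) *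
      (∏ i ∈ range n, (Polynomial.X - Polynomial.C (q^(i+1)))) with hRdef
  set P : Polynomial F := (Polynomial.X - 1) * R with hPdef
  set Q : Polynomial F :=
    ∑ k ∈ Icc (-(n:ℤ)-1) (m:ℤ), Polynomial.C (c k) * Polynomial.X ^ ((n:ℤ)+1+k).toNat
    with hQdef
  have hPeval : ∀ z : F, z ≠ 0 → P.eval z =
      z^(n+1) * ((1 - z⁻¹) *
        ((∏ i ∈ range m, (1 - z * q ^ (i + 1))) *
          (∏ i ∈ range n, (1 - z⁻¹ * q ^ (i + 1))))) := by
    intro z hz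
    have hev : P.eval z = (z - 1) *
        ((∏ i ∈ range m, (1 - q^(i+1) * z)) * (∏ i ∈ range n, (z - q^(i+1)))) := by
      simp [hPdef, hRdef, Polynomial.eval_prod]
    rw [hev]
    have h1 : ∏ i ∈ range n, (z - q^(i+1)) = z^n * ∏ i ∈ range n, (1 - z⁻¹ * q^(i+1)) := by
      rw [← card_range n, ← prod_const, card_range, ← prod_mul_distrib]
      apply prod_congr rfl
      intro i _
      field_simp
    have h2 : (z:F)^(n+1) * (1 - z⁻¹) = (z - 1) * z^n := by
      rw [pow_succ]
      field_simp
    have hcomm : ∏ i ∈ range m, (1 - q^(i+1) * z) = ∏ i ∈ range m, (1 - z * q^(i+1)) :=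
      prod_congr rfl (by intro i _; ring)
    rw [hcomm, h1]
    linear_combination ((∏ i ∈ range m, (1 - z * q^(i+1))) * ∏ i ∈ range n, (1 - z⁻¹ * q^(i+1))) * h2
      + (2 * z^n * (∏ i ∈ range m, (1 - z * q^(i+1))) * ∏ i ∈ range n, (1 - z⁻¹ * q^(i+1))) * (mul_inv_cancel₀ hz)
  have hQeval : ∀ z : F, z ≠ 0 → Q.eval z =
      z^(n+1) * ∑ k ∈ Icc (-(n:ℤ)-1) (m:ℤ),
        (-1 : F) ^ k * q ^ (k * (k + 1) / 2) * z ^ k * qbinom (m + n + 1) ((n : ℤ) + 1 + k) := by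
    intro z hz
    rw [hQdef, Polynomial.eval_finset_sum, mul_sum]
    apply sum_congr rfl
    intro k hk
    have hk' : (0:ℤ) ≤ (n:ℤ)+1+k := by
      have := (mem_Icc.mp hk).1; omega
    simp only [Polynomial.eval_mul, Polynomial.eval_C, Polynomial.eval_pow, Polynomial.eval_X]
    have hzp : z^(((n:ℤ)+1+k).toNat) = z^(n+1) * z^k := by
      rw [← zpow_natCast z (((n:ℤ)+1+k).toNat), Int.toNat_of_nonneg hk',
        ← zpow_natCast z (n+1), ← zpow_add₀ hz]
      congr 1 <;> (try (push_cast; ring))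
    rw [hzp, hcdef]
    ring
  -- P = Q as polynomials
  have hPQ : P = Q := by
    have hroot : ∀ z : F, z ≠ 0 → (P - Q).IsRoot z := by
      intro z hz
      have h1 := part1 m n z hz
      rw [← hqdef] at h1
      simp only [Polynomial.IsRoot, Polynomial.eval_sub]
      rw [hPeval z hz, hQeval z hz, h1, sub_self]
    have hinj : Function.Injective (fun i : ℕ => q^(i+1)) := by
      intro i j h
      simp only at h
      by_contra hne
      rcases Nat.lt_or_ge i j with hij | hij
      · have h3 : q^(j+1) * q^(j-i) = q^(j+1) := by
          conv_rhs => rw [show q^(j+1) = q^(i+1) * q^(j-i) from by rw [← pow_add]; congr 1; omega, h]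
        rcases mul_right_eq_self₀.mp h3 with h2 | h2
        · exact X_pow_ne_one (j-i) (by omega) h2
        · exact pow_ne_zero _ hq h2
      · have hij' : j < i := by omega
        have h3 : q^(i+1) * q^(i-j) = q^(i+1) := by
          conv_rhs => rw [show q^(i+1) = q^(j+1) * q^(i-j) from by rw [← pow_add]; congr 1; omega, ← h]
        rcases mul_right_eq_self₀.mp h3 with h2 | h2
        · exact X_pow_ne_one (i-j) (by omega) h2
        · exact pow_ne_zero _ hq h2
    have hinf : {z : F | (P - Q).IsRoot z}.Infinite :=
      Set.infinite_of_injective_forall_mem hinj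
        (fun i => hroot (q^(i+1)) (pow_ne_zero _ hq))
    exact sub_eq_zero.mp (Polynomial.eq_zero_of_infinite_isRoot _ hinf)
  -- derivative at 1
  have hL : Polynomial.eval 1 (Polynomial.derivative P) = Polynomial.eval 1 R := by
    rw [hPdef, Polynomial.derivative_mul]
    simp
  have hReval : Polynomial.eval 1 R =
      (∏ i ∈ range m, (1 - q^(i+1))) * ∏ i ∈ range n, (1 - q^(i+1)) := by
    rw [hRdef]
    simp [Polynomial.eval_prod]
  have hRder : Polynomial.eval 1 (Polynomial.derivative Q) =
      ∑ k ∈ Icc (-(n:ℤ)-1) (m:ℤ), c k * ((((n:ℤ)+1+k) : ℤ) : F) := by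
    rw [hQdef, map_sum, Polynomial.eval_finset_sum]
    apply sum_congr rfl
    intro k hk
    have hk' : (0:ℤ) ≤ (n:ℤ)+1+k := by
      have := (mem_Icc.mp hk).1; omega
    rw [Polynomial.derivative_C_mul, Polynomial.derivative_X_pow]
    simp only [Polynomial.eval_mul, Polynomial.eval_C, Polynomial.eval_pow, Polynomial.eval_X,
      one_pow, mul_one]
    congr 1
    exact_mod_cast congrArg (fun t : ℤ => (t : F)) (Int.toNat_of_nonneg hk')
  have hsum0 : ∑ k ∈ Icc (-(n:ℤ)-1) (m:ℤ), c k = 0 := by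
    have h1 := part1 m n 1 one_ne_zero
    rw [← hqdef] at h1
    simp only [inv_one, sub_self, zero_mul, one_zpow, mul_one] at h1
    rw [hcdef]
    rw [← h1]
  have hfin : ∑ k ∈ Icc (-(n:ℤ)-1) (m:ℤ), c k * ((((n:ℤ)+1+k) : ℤ) : F)
      = ∑ k ∈ Icc (-(n:ℤ)-1) (m:ℤ), c k * (k : F) := by
    have : ∀ k ∈ Icc (-(n:ℤ)-1) (m:ℤ), c k * ((((n:ℤ)+1+k) : ℤ) : F)
        = c k * (((n:ℕ):F)+1) + c k * (k : F) := by
      intro k _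
      push_cast
      ring
    rw [sum_congr rfl this, sum_add_distrib, ← sum_mul, hsum0, zero_mul, zero_add]
  have hmain : Polynomial.eval 1 (Polynomial.derivative P)
      = Polynomial.eval 1 (Polynomial.derivative Q) := by rw [hPQ]
  rw [hL, hReval, hRder, hfin] at hmain
  calc (∏ i ∈ Finset.range m, (1 - (1 : RatFunc ℚ) * q ^ (i + 1))) *
        (∏ i ∈ Finset.range n, (1 - (1 : RatFunc ℚ)⁻¹ * q ^ (i + 1)))
      = (∏ i ∈ range m, (1 - q^(i+1))) * ∏ i ∈ range n, (1 - q^(i+1)) := by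
        simp
    _ = ∑ k ∈ Icc (-(n:ℤ)-1) (m:ℤ), c k * (k : F) := hmain
    _ = _ := by
        apply sum_congr rfl
        intro k _
        rw [hcdef]
        ring


/-- The differentiation step in the proof of Theorem 2.1. Let
`f(z) = (zq;q)_m (z⁻¹q;q)_n`. Then `(1 - z⁻¹) f(z)` equals MacMahon'\''s sum with `n`
replaced by `n+1` (an identity of Laurent polynomials in `z`, stated for all nonzero
`z` in `ℚ(q)`), and consequently (evaluating the `z`-derivative at `z = 1`)
`f(1) = (q;q)_m (q;q)_n = Σ_{k=-n-1}^{m} (-1)^k k q^{C(k+1,2)} [m+n+1, n+1+k]_q`. -/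
theorem differentiation_step (m n : ℕ) :
    (∀ z : RatFunc ℚ, z ≠ 0 →
      (1 - z⁻¹) *
        ((∏ i ∈ Finset.range m, (1 - z * (RatFunc.X : RatFunc ℚ) ^ (i + 1))) *
          (∏ i ∈ Finset.range n, (1 - z⁻¹ * (RatFunc.X : RatFunc ℚ) ^ (i + 1)))) =
        ∑ k ∈ Finset.Icc (-(n : ℤ) - 1) (m : ℤ),
          (-1 : RatFunc ℚ) ^ k * (RatFunc.X : RatFunc ℚ) ^ (k * (k + 1) / 2) * z ^ k *
            qbinom (m + n + 1) ((n : ℤ) + 1 + k)) ∧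
    (∏ i ∈ Finset.range m, (1 - (1 : RatFunc ℚ) * (RatFunc.X : RatFunc ℚ) ^ (i + 1))) *
        (∏ i ∈ Finset.range n, (1 - (1 : RatFunc ℚ)⁻¹ * (RatFunc.X : RatFunc ℚ) ^ (i + 1))) =
      ∑ k ∈ Finset.Icc (-(n : ℤ) - 1) (m : ℤ),
        (-1 : RatFunc ℚ) ^ k * (k : RatFunc ℚ) *
          (RatFunc.X : RatFunc ℚ) ^ (k * (k + 1) / 2) *
            qbinom (m + n + 1) ((n : ℤ) + 1 + k) := by
  exact ⟨part1 m n, part2 m n⟩
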